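/- Since the embedding vectors of the graph permutation entropy on the directed path coincide with the classical embedding vectors of the time series (for any m ≥ 2 and L ≥ 1), the resulting ordinal pattern distribution, and hence the permutation entropy values, are equal: PE(m, L) = PE_G(m, L) for G the directed path on N vertices. -/

import Mathlib

open Finset

def stepFinset (N : ℕ) : ℕ → ℕ → Finset ℕ
  | 0, i => {i}
  | k+1, i => (stepFinset N k i).biUnion (fun j => if j + 1 ≤ N then {j + 1} else (∅ : Finset ℕ))

open scoped Classical in
noncomputable def pattern (m : ℕ) (v : Fin m → ℝ) : List (Fin m) :=
  (List.finRange m).mergeSort (fun a b => decide (v a < v b ∨ (v a = v b ∧ a ≤ b)))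

open scoped Classical in
noncomputable def shannonF {α β : Type*} (s : Finset α) (f : α → β) : ℝ :=
  ∑ b ∈ s.image f,
    -((((s.filter (fun a => f a = b)).card : ℝ) / s.card) *
      Real.log (((s.filter (fun a => f a = b)).card : ℝ) / s.card))

lemma stepEq (N i : ℕ) (hi : i ≤ N) :
    ∀ k, stepFinset N k i = if i + k ≤ N then {i + k} else ∅ := by
  intro k
  induction k with
  | zero => simp [stepFinset, hi]
  | succ k ih =>
    rw [show stepFinset N (k+1) i
        = (stepFinset N k i).biUnion (fun j => if j + 1 ≤ N then {j + 1} else ∅) from rfl, ih]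
    by_cases h : i + k ≤ N
    · rw [if_pos h]
      by_cases h2 : i + (k + 1) ≤ N
      · rw [if_pos h2]
        simp [show i + k + 1 ≤ N by omega, show i + k < N by omega, ← add_assoc]
      · rw [if_neg h2]
        simp [show ¬ (i + k + 1 ≤ N) by omega, show N ≤ i + k by omega]
    · rw [if_neg h, if_neg (by omega)]
      simp

open scoped Classical in
lemma shannonF_congr {α β : Type*} (s : Finset α) (f g : α → β)
    (h : ∀ a ∈ s, f a = g a) : shannonF s f = shannonF s g := by
  unfold shannonF
  rw [Finset.image_congr h]
  apply Finset.sum_congr rfl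
  intro b hb
  have hfil : s.filter (fun a => f a = b) = s.filter (fun a => g a = b) := by
    apply Finset.filter_congr
    intro a ha
    simp [h a ha]
  rw [hfil]

theorem stmt8 (N m L : ℕ) (hm : 2 ≤ m) (hL : 1 ≤ L) (x : ℕ → ℝ) :
    shannonF (Finset.Icc 1 (N - (m - 1) * L))
      (fun i => pattern m (fun k => x (i + (k : ℕ) * L)))
      = shannonF ((Finset.Icc 1 N).filter fun i => (stepFinset N ((m - 1) * L) i).Nonempty)
        (fun i => pattern m (fun k =>
          (∑ j ∈ stepFinset N ((k : ℕ) * L) i, x j) / ((stepFinset N ((k : ℕ) * L) i).card : ℝ))) := by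
  classical
  have hset : (Finset.Icc 1 (N - (m - 1) * L))
      = (Finset.Icc 1 N).filter fun i => (stepFinset N ((m - 1) * L) i).Nonempty := by
    ext i
    simp only [mem_Icc, mem_filter]
    constructor
    · rintro ⟨h1, h2⟩
      have hiN : i ≤ N := by omega
      refine ⟨⟨h1, hiN⟩, ?_⟩
      rw [stepEq N i hiN, if_pos (by omega)]
      simp
    · rintro ⟨⟨h1, h2⟩, h3⟩
      rw [stepEq N i h2] at h3
      refine ⟨h1, ?_⟩
      by_cases h : i + (m - 1) * L ≤ N
      · omega
      · rw [if_neg h] at h3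
        simp at h3
  rw [hset]
  apply shannonF_congr
  intro i hi
  simp only [mem_filter, mem_Icc] at hi
  obtain ⟨⟨h1, h2⟩, h3⟩ := hi
  have hne : i + (m - 1) * L ≤ N := by
    by_cases h : i + (m - 1) * L ≤ N
    · exact h
    · rw [stepEq N i h2, if_neg h] at h3
      simp at h3
  congr 1
  funext k
  have hk : (k : ℕ) * L ≤ (m - 1) * L :=
    Nat.mul_le_mul_right L (by omega)
  have hkN : i + (k : ℕ) * L ≤ N := by omega
  rw [stepEq N i h2, if_pos hkN]
  simp
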